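/- There exists a constant c > 0 such that for every real λ > 1, every L* ∈ (0,1/2), and every q ∈ (0,1/2) satisfying H(L*) < U_λ(q) < (1+H(L*))/2, the function U_λ is differentiable at q and its derivative satisfies U_λ'(q) ≥ min( c, log₂((1-x)/x) ), where x = 1 - 2^{-(1+H(L*))/2}; moreover log₂((1-x)/x) > (2/ln 2)·(L* - 1/2)², so that 1/U_λ'(q) ≤ max(1/c, (ln 2)/2 · (L* - 1/2)^{-2}). -/

import Mathlib

set_option maxHeartbeats 1000000

open MeasureTheory Filter

noncomputable def binEnt (p : ℝ) : ℝ :=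
  -(p * Real.logb 2 p) - (1 - p) * Real.logb 2 (1 - p)

noncomputable def klBin (a b : ℝ) : ℝ :=
  a * Real.logb 2 (a / b) + (1 - a) * Real.logb 2 ((1 - a) / (1 - b))

noncomputable def pstar (lam q : ℝ) : ℝ := 1 / (1 + ((1 - q) / q) ^ (lam / (lam - 1)))

noncomputable def Ulam (lam q : ℝ) : ℝ :=
  lam * klBin (pstar lam q) q + binEnt (pstar lam q)

open Real Set

lemma aux_exp_ineq (s : ℝ) (h0 : 0 ≤ s) (h1 : s < 1) :
    (1 - s) * Real.exp s ≤ (1 + s) * Real.exp (-s) := by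
  set G : ℝ → ℝ := fun x => (1 + x) * Real.exp (-x) - (1 - x) * Real.exp x with hG
  have hd : ∀ x : ℝ, HasDerivAt G (x * (Real.exp x - Real.exp (-x))) x := by
    intro x
    have h1' : HasDerivAt (fun y : ℝ => (1 + y) * Real.exp (-y))
        (1 * Real.exp (-x) + (1 + x) * (Real.exp (-x) * (-1))) x :=
      ((hasDerivAt_id x).const_add 1).mul ((hasDerivAt_id x).neg.exp)
    have h2' : HasDerivAt (fun y : ℝ => (1 - y) * Real.exp y)
        ((-1) * Real.exp x + (1 - x) * Real.exp x) x :=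
      ((hasDerivAt_id x).const_sub 1).mul (Real.hasDerivAt_exp x)
    have := h1'.sub h2'
    exact this.congr_deriv (by ring)
  have hmono : MonotoneOn G (Icc 0 1) := by
    apply monotoneOn_of_deriv_nonneg (convex_Icc 0 1)
    · exact (Continuous.continuousOn (by continuity))
    · intro x _
      exact (hd x).differentiableAt.differentiableWithinAt
    · intro x hx
      rw [interior_Icc] at hx
      rw [(hd x).deriv]
      have : Real.exp (-x) ≤ Real.exp x := Real.exp_le_exp.mpr (by linarith [hx.1])
      have hx0 : 0 ≤ x := hx.1.le
      nlinarith
  have h00 : G 0 = 0 := by simp [hG]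
  have := hmono (show (0:ℝ) ∈ Icc (0:ℝ) 1 by simp) (show s ∈ Icc (0:ℝ) 1 by constructor <;> linarith) h0
  rw [h00] at this
  simp only [hG] at this
  linarith

lemma aux_log_ratio (s : ℝ) (h0 : 0 ≤ s) (h1 : s < 1) :
    2 * s ≤ Real.log ((1 + s) / (1 - s)) := by
  have h1s : 0 < 1 - s := by linarith
  have h1s' : 0 < 1 + s := by linarith
  have key : (1 - s) * Real.exp (2 * s) ≤ 1 + s := by
    have := aux_exp_ineq s h0 h1
    have hmul := mul_le_mul_of_nonneg_right this (Real.exp_pos s).le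
    have e1 : (1 - s) * Real.exp s * Real.exp s = (1 - s) * Real.exp (2 * s) := by
      rw [mul_assoc, ← Real.exp_add]; ring_nf
    have e2 : (1 + s) * Real.exp (-s) * Real.exp s = 1 + s := by
      rw [mul_assoc, ← Real.exp_add]; simp
    rw [e1, e2] at hmul
    exact hmul
  have : Real.exp (2 * s) ≤ (1 + s) / (1 - s) := by
    rw [le_div_iff₀ h1s]; linarith [key]
  calc 2 * s = Real.log (Real.exp (2 * s)) := (Real.log_exp _).symm
    _ ≤ Real.log ((1 + s) / (1 - s)) := Real.log_le_log (Real.exp_pos _) this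

lemma aux_pinsker (p : ℝ) (h0 : 0 < p) (h2 : p ≤ 1 / 2) :
    binEnt p ≤ 1 - 2 / Real.log 2 * (p - 1 / 2) ^ 2 := by
  set φ : ℝ → ℝ := fun y => Real.log 2 - 2 * (y - 1 / 2) ^ 2 + y * Real.log y
    + (1 - y) * Real.log (1 - y) with hφ
  have hd : ∀ y : ℝ, 0 < y → y < 1 →
      HasDerivAt φ (-4 * (y - 1 / 2) + Real.log y - Real.log (1 - y)) y := by
    intro y hy0 hy1
    have h1' : HasDerivAt (fun z : ℝ => (z - 1 / 2) ^ 2) (2 * (y - 1 / 2) ^ 1 * 1) y :=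
      ((hasDerivAt_id y).sub_const (1 / 2)).pow 2
    have h2' : HasDerivAt (fun z : ℝ => z * Real.log z) (Real.log y + 1) y :=
      Real.hasDerivAt_mul_log hy0.ne'
    have h3' : HasDerivAt (fun z : ℝ => (1 - z) * Real.log (1 - z))
        ((Real.log (1 - y) + 1) * (-1)) y := by
      have := (Real.hasDerivAt_mul_log (x := 1 - y) (by linarith)).comp y
        ((hasDerivAt_id y).const_sub 1)
      simpa [Function.comp_def] using this
    have := (((h1'.const_mul 2).const_sub (Real.log 2)).add h2').add h3'
    exact this.congr_deriv (by ring)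
  have hanti : AntitoneOn φ (Icc p (1 / 2)) := by
    apply antitoneOn_of_deriv_nonpos (convex_Icc _ _)
    · apply ContinuousOn.add
      apply ContinuousOn.add
      · fun_prop
      · exact Real.continuous_mul_log.continuousOn
      · exact (Real.continuous_mul_log.comp (by continuity)).continuousOn
    · intro y hy
      rw [interior_Icc] at hy
      exact (hd y (lt_trans h0 hy.1) (by linarith [hy.2])).differentiableAt.differentiableWithinAt
    · intro y hy
      rw [interior_Icc] at hy
      have hy0 : 0 < y := lt_trans h0 hy.1
      have hy1 : y < 1 := by linarith [hy.2]
      rw [(hd y hy0 hy1).deriv]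
      have hs := aux_log_ratio (1 - 2 * y) (by linarith [hy.2]) (by linarith)
      have : (1 + (1 - 2 * y)) / (1 - (1 - 2 * y)) = (1 - y) / y := by
        rw [div_eq_div_iff (by linarith) (by linarith)]; ring
      rw [this, Real.log_div (by linarith) hy0.ne'] at hs
      linarith
  have hval : φ (1 / 2) = 0 := by
    simp only [hφ]
    rw [show (1:ℝ) - 1/2 = 2⁻¹ by norm_num, show ((1:ℝ)/2) = 2⁻¹ by norm_num, Real.log_inv]
    ring
  have hphip : 0 ≤ φ p := by
    have := hanti (left_mem_Icc.mpr h2) (right_mem_Icc.mpr h2) h2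
    rw [hval] at this; exact this
  -- convert to binEnt
  have hlog2 : 0 < Real.log 2 := Real.log_pos (by norm_num)
  simp only [hφ] at hphip
  rw [binEnt]
  rw [Real.logb, Real.logb]
  rw [show -(p * (Real.log p / Real.log 2)) - (1 - p) * (Real.log (1 - p) / Real.log 2)
      = (-(p * Real.log p) - (1 - p) * Real.log (1 - p)) / Real.log 2 by ring,
    show (1 : ℝ) - 2 / Real.log 2 * (p - 1/2)^2
      = (Real.log 2 - 2 * (p - 1/2)^2) / Real.log 2 by rw [eq_div_iff hlog2.ne']; field_simp,
    div_le_div_iff₀ hlog2 hlog2]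
  nlinarith [hphip]

lemma pstar_facts (lam q : ℝ) (hlam : 1 < lam) (hq0 : 0 < q) (hq1 : q < 1) :
    0 < pstar lam q ∧ pstar lam q < 1 ∧
    (1 - pstar lam q) / pstar lam q = ((1 - q) / q) ^ (lam / (lam - 1)) := by
  have ht0 : 0 < (1 - q) / q := div_pos (by linarith) hq0
  have hR0 : 0 < ((1 - q) / q) ^ (lam / (lam - 1)) := Real.rpow_pos_of_pos ht0 _
  set R := ((1 - q) / q) ^ (lam / (lam - 1)) with hR
  have h1R : 0 < 1 + R := by linarith
  refine ⟨by rw [pstar]; positivity, ?_, ?_⟩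
  · rw [pstar, div_lt_one h1R]; linarith
  · rw [pstar]
    field_simp
    rw [hR]; ring

lemma Ulam_eq (lam q : ℝ) (hlam : 1 < lam) (hq0 : 0 < q) (hq1 : q < 1) :
    Ulam lam q = (lam - 1) * Real.logb 2 (1 - pstar lam q) - lam * Real.logb 2 (1 - q) := by
  obtain ⟨hp0, hp1, hpr⟩ := pstar_facts lam q hlam hq0 hq1
  set p := pstar lam q with hp
  have h1p : 0 < 1 - p := by linarith
  have ht0 : 0 < (1 - q) / q := div_pos (by linarith) hq0
  have h1q : 0 < 1 - q := by linarith
  have hm : lam - 1 ≠ 0 := by linarith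
  -- log relations
  have hlt : Real.log ((1 - q) / q) = Real.log (1 - q) - Real.log q :=
    Real.log_div h1q.ne' hq0.ne'
  have hlp : Real.log (1 - p) - Real.log p = (lam / (lam - 1)) * (Real.log (1 - q) - Real.log q) := by
    have : Real.log ((1 - p) / p) = (lam / (lam - 1)) * Real.log ((1 - q) / q) := by
      rw [hpr, Real.log_rpow ht0]
    rw [Real.log_div h1p.ne' hp0.ne', hlt] at this
    exact this
  have hlog2 : Real.log 2 ≠ 0 := (Real.log_pos (by norm_num)).ne'
  rw [Ulam, klBin, binEnt, ← hp]
  simp only [Real.logb]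
  rw [Real.log_div hp0.ne' hq0.ne', Real.log_div h1p.ne' h1q.ne']
  have hlp' : (lam - 1) * (Real.log (1 - p) - Real.log p)
      = lam * (Real.log (1 - q) - Real.log q) := by
    rw [hlp]; field_simp
  field_simp
  linear_combination (-(p)) * hlp'

lemma Ulam_hasDerivAt (lam q : ℝ) (hlam : 1 < lam) (hq0 : 0 < q) (hq1 : q < 1) :
    HasDerivAt (Ulam lam) (lam * (q - pstar lam q) / (q * (1 - q) * Real.log 2)) q := by
  obtain ⟨hp0, hp1, hpr⟩ := pstar_facts lam q hlam hq0 hq1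
  have h1q : 0 < 1 - q := by linarith
  have hm : (0:ℝ) < lam - 1 := by linarith
  set κ := lam / (lam - 1) with hκ
  set t := (1 - q) / q with ht
  have ht0 : 0 < t := div_pos h1q hq0
  set v := t ^ κ with hv
  have hv0 : 0 < v := Real.rpow_pos_of_pos ht0 _
  have hw0 : 0 < 1 + v := by linarith
  -- derivative of inner function
  have hu : HasDerivAt (fun y : ℝ => (1 - y) / y) (((-1) * q - (1 - q) * 1) / q ^ 2) q :=
    ((hasDerivAt_id q).const_sub 1).div (hasDerivAt_id q) hq0.ne'
  have hrpow : HasDerivAt (fun y : ℝ => ((1 - y) / y) ^ κ)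
      ((((-1) * q - (1 - q) * 1) / q ^ 2) * κ * t ^ (κ - 1)) q :=
    hu.rpow_const (Or.inl ht0.ne')
  have hps : HasDerivAt (fun y : ℝ => pstar lam y)
      ((0 * (1 + v) - 1 * ((((-1) * q - (1 - q) * 1) / q ^ 2) * κ * t ^ (κ - 1))) / (1 + v) ^ 2) q := by
    have := (hasDerivAt_const q (1:ℝ)).div (hrpow.const_add 1) hw0.ne'
    exact this
  set pd := ((0 * (1 + v) - 1 * ((((-1) * q - (1 - q) * 1) / q ^ 2) * κ * t ^ (κ - 1))) / (1 + v) ^ 2) with hpd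
  have hps1 : pstar lam q = 1 / (1 + v) := by rw [pstar, hv, ht, hκ]
  have h1p0 : 0 < 1 - pstar lam q := by linarith
  have hlog1 : HasDerivAt (fun y : ℝ => Real.log (1 - pstar lam y)) (-pd / (1 - pstar lam q)) q := by
    exact ((hps.const_sub 1).log h1p0.ne')
  have hlog2' : HasDerivAt (fun y : ℝ => Real.log (1 - y)) ((-1) / (1 - q)) q :=
    ((hasDerivAt_id q).const_sub 1).log h1q.ne'
  have hF : HasDerivAt (fun y : ℝ => (lam - 1) * Real.logb 2 (1 - pstar lam y) - lam * Real.logb 2 (1 - y))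
      ((lam - 1) * ((-pd / (1 - pstar lam q)) / Real.log 2) - lam * (((-1) / (1 - q)) / Real.log 2)) q := by
    have h1 := (hlog1.div_const (Real.log 2)).const_mul (lam - 1)
    have h2 := (hlog2'.div_const (Real.log 2)).const_mul lam
    have := h1.sub h2
    exact this
  have hU : HasDerivAt (Ulam lam)
      ((lam - 1) * ((-pd / (1 - pstar lam q)) / Real.log 2) - lam * (((-1) / (1 - q)) / Real.log 2)) q := by
    apply hF.congr_of_eventuallyEq
    filter_upwards [Ioo_mem_nhds hq0 hq1] with y hy
    exact Ulam_eq lam y hlam hy.1 hy.2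
  convert hU using 1
  -- algebra
  have hL2 : Real.log 2 ≠ 0 := (Real.log_pos (by norm_num)).ne'
  have htk1 : t ^ (κ - 1) = v / t := by
    rw [hv, Real.rpow_sub ht0, Real.rpow_one]
  have h1p : 1 - pstar lam q = v / (1 + v) := by rw [hps1]; field_simp; ring
  rw [hpd, htk1, hps1, hκ, ht]
  have hm' : lam - 1 ≠ 0 := hm.ne'
  have hv0' : v ≠ 0 := hv0.ne'
  field_simp
  ring_nf
  rw [mul_assoc lam v, mul_inv_cancel₀ hv0']; ring

lemma aux_min (m l : ℝ) (hm : 0 < m) (hl : 0 < l) : min 1 l * (m + l) ≤ (m + 1) * l := by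
  rcases min_cases 1 l with ⟨h1, h2⟩ | ⟨h1, h2⟩ <;> rw [h1] <;> nlinarith

theorem Ulam_deriv_lower_bound :
    ∃ c : ℝ, 0 < c ∧
      ∀ (lam : ℝ), 1 < lam →
      ∀ (Lstar : ℝ), 0 < Lstar → Lstar < 1 / 2 →
      ∀ (q : ℝ), 0 < q → q < 1 / 2 →
        binEnt Lstar < Ulam lam q → Ulam lam q < (1 + binEnt Lstar) / 2 →
      ∀ (x : ℝ), x = 1 - (2 : ℝ) ^ (-(1 + binEnt Lstar) / 2) →
        DifferentiableAt ℝ (Ulam lam) q ∧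
        min c (Real.logb 2 ((1 - x) / x)) ≤ deriv (Ulam lam) q ∧
        (2 / Real.log 2) * (Lstar - 1 / 2) ^ 2 < Real.logb 2 ((1 - x) / x) ∧
        1 / deriv (Ulam lam) q ≤ max (1 / c) (Real.log 2 / 2 * ((Lstar - 1 / 2) ^ 2)⁻¹) := by
  have hlog2 : (0:ℝ) < Real.log 2 := Real.log_pos (by norm_num)
  refine ⟨1 / Real.log 2, by positivity, ?_⟩
  intro lam hlam Lstar hL0 hL2 q hq0 hq2 _hU1 hU2 x hx
  set c : ℝ := 1 / Real.log 2 with hc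
  have hq1 : q < 1 := by linarith
  have h1q : 0 < 1 - q := by linarith
  have hm : (0:ℝ) < lam - 1 := by linarith
  obtain ⟨hp0, hp1, hpr⟩ := pstar_facts lam q hlam hq0 hq1
  set p := pstar lam q with hpdef
  set t : ℝ := (1 - q) / q with ht
  have ht0 : 0 < t := div_pos h1q hq0
  have ht1 : 1 < t := by rw [ht, lt_div_iff₀ hq0]; linarith
  have hκ1 : 1 < lam / (lam - 1) := by rw [lt_div_iff₀ hm]; linarith
  set R : ℝ := t ^ (lam / (lam - 1)) with hR
  have hR0 : 0 < R := Real.rpow_pos_of_pos ht0 _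
  have htR : t < R := by
    calc t = t ^ (1:ℝ) := (Real.rpow_one t).symm
    _ < R := Real.rpow_lt_rpow_of_exponent_lt ht1 hκ1
  -- p < q
  have hpq : p < q := by
    have h2 : t < (1 - p) / p := by rw [hpr]; exact htR
    rw [ht, div_lt_div_iff₀ hq0 hp0] at h2
    linarith
  -- binEnt Lstar ∈ [0, 1)
  have hH0 : 0 ≤ binEnt Lstar := by
    have h1 : Real.logb 2 Lstar ≤ 0 := Real.logb_nonpos (by norm_num) hL0.le (by linarith)
    have h2 : Real.logb 2 (1 - Lstar) ≤ 0 :=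
      Real.logb_nonpos (by norm_num) (by linarith) (by linarith)
    rw [binEnt]
    have a1 : 0 ≤ Lstar * -Real.logb 2 Lstar := mul_nonneg hL0.le (neg_nonneg.mpr h1)
    have a2 : 0 ≤ (1 - Lstar) * -Real.logb 2 (1 - Lstar) :=
      mul_nonneg (by linarith) (neg_nonneg.mpr h2)
    linarith
  set H := binEnt Lstar with hH
  set B : ℝ := (2:ℝ) ^ (-(1 + H) / 2) with hB
  have hB0 : 0 < B := Real.rpow_pos_of_pos (by norm_num) _
  have hB1 : B < 1 := Real.rpow_lt_one_of_one_lt_of_neg (by norm_num) (by linarith)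
  have hx0 : 0 < x := by rw [hx]; linarith
  have hx1 : x < 1 := by rw [hx]; linarith
  -- q < x
  have hUlb : -Real.logb 2 (1 - q) ≤ Ulam lam q := by
    rw [Ulam_eq lam q hlam hq0 hq1]
    have hmono : Real.logb 2 (1 - q) ≤ Real.logb 2 (1 - p) :=
      Real.logb_le_logb_of_le (by norm_num) h1q (by linarith)
    have a1 : 0 ≤ (lam - 1) * (Real.logb 2 (1 - p) - Real.logb 2 (1 - q)) :=
      mul_nonneg hm.le (sub_nonneg.mpr hmono)
    linarith
  have hqx : q < x := by
    have h1 : -Real.logb 2 (1 - q) < (1 + H) / 2 := by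
      calc -Real.logb 2 (1 - q) ≤ Ulam lam q := hUlb
      _ < (1 + H) / 2 := hU2
    have h2 : -(1 + H) / 2 < Real.logb 2 (1 - q) := by linarith
    have h3 : B < (2:ℝ) ^ Real.logb 2 (1 - q) :=
      Real.rpow_lt_rpow_of_exponent_lt (by norm_num) h2
    rw [Real.rpow_logb (by norm_num) (by norm_num) h1q] at h3
    rw [hx]; linarith
  set t₀ : ℝ := (1 - x) / x with ht₀
  have ht₀0 : 0 < t₀ := div_pos (by linarith) hx0
  have ht₀t : t₀ < t := by
    rw [ht₀, ht, div_lt_div_iff₀ hx0 hq0]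
    have a1 : 0 ≤ (x - q) * q := mul_nonneg (by linarith) hq0.le
    have a2 : 0 ≤ (x - q) * x := mul_nonneg (by linarith) hx0.le
    linarith
  -- Part 3 : pinsker consequence
  set d : ℝ := Lstar - 1/2 with hd
  have hdne : d ≠ 0 := by rw [hd]; intro h; rw [sub_eq_zero] at h; linarith
  have hd2 : 0 < d ^ 2 := lt_of_le_of_ne (sq_nonneg d) (Ne.symm (pow_ne_zero 2 hdne))
  have hPin : H ≤ 1 - 2 / Real.log 2 * d ^ 2 := aux_pinsker Lstar hL0 hL2.le
  set ε : ℝ := d ^ 2 / Real.log 2 with hε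
  have hε0 : 0 < ε := by positivity
  set z : ℝ := (2:ℝ) ^ ε with hz
  have hz1 : 1 < z := by
    rw [hz]
    rw [Real.one_lt_rpow_iff_of_pos (by norm_num)]
    exact Or.inl ⟨by norm_num, hε0⟩
  have hzB : z / 2 ≤ B := by
    have h1 : ε - 1 ≤ -(1 + H) / 2 := by
      have : 2 / Real.log 2 * d ^ 2 = 2 * ε := by rw [hε]; ring
      rw [this] at hPin
      linarith
    have h2 : (2:ℝ) ^ (ε - 1) ≤ B := Real.rpow_le_rpow_of_exponent_le (by norm_num) h1
    rw [Real.rpow_sub (by norm_num), Real.rpow_one] at h2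
    exact h2
  have hz2e : (2:ℝ) ^ (2 * ε) = z ^ 2 := by
    rw [hz, ← Real.rpow_natCast ((2:ℝ) ^ ε) 2, ← Real.rpow_mul (by norm_num)]
    norm_num
    ring_nf
  have hz2 : z ^ 2 < t₀ := by
    have hxB : 1 - x = B := by rw [hx]; ring
    have hx'B : x = 1 - B := by rw [hx]
    rw [ht₀, hxB, hx'B, lt_div_iff₀ (by linarith)]
    have hz0 : (0:ℝ) < z := by linarith
    have k1 : z / 2 * (1 + z ^ 2) ≤ B * (1 + z ^ 2) :=
      mul_le_mul_of_nonneg_right hzB (by positivity)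
    have k2 : 0 < z * (z - 1) ^ 2 := mul_pos hz0 (pow_pos (sub_pos.mpr hz1) 2)
    linarith [k1, k2]
  have hpart3 : 2 / Real.log 2 * d ^ 2 < Real.logb 2 t₀ := by
    have h1 : Real.logb 2 ((2:ℝ) ^ (2 * ε)) < Real.logb 2 t₀ := by
      apply Real.logb_lt_logb (by norm_num) (Real.rpow_pos_of_pos (by norm_num) _)
      rw [hz2e]; exact hz2
    rw [Real.logb_rpow (by norm_num) (by norm_num)] at h1
    have : 2 / Real.log 2 * d ^ 2 = 2 * ε := by rw [hε]; ring
    rw [this]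
    exact h1
  -- derivative
  have hder := Ulam_hasDerivAt lam q hlam hq0 hq1
  have hdiff : DifferentiableAt ℝ (Ulam lam) q := hder.differentiableAt
  have hderiv : deriv (Ulam lam) q = lam * (q - p) / (q * (1 - q) * Real.log 2) := hder.deriv
  -- lower bound on derivative
  set l : ℝ := Real.log t with hl
  have hl0 : 0 < l := Real.log_pos ht1
  set m : ℝ := lam - 1 with hm'
  have hml : 0 < m + l := by linarith
  have hRe : R = t * Real.exp (l / m) := by
    rw [hR, Real.rpow_def_of_pos ht0]
    rw [show Real.log t * (lam / (lam - 1)) = l + l / m by rw [hl, hm']; field_simp [show lam - 1 ≠ 0 by linarith]; ring]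
    rw [Real.exp_add, Real.exp_log ht0]
  have hexp := Real.add_one_le_exp (l / m)
  have hRge : t * (1 + l / m) ≤ R := by
    rw [hRe]
    exact mul_le_mul_of_nonneg_left (by linarith) ht0.le
  have hRm : t * (m + l) ≤ R * m := by
    have h0 := mul_le_mul_of_nonneg_right hRge hm.le
    have he1 : t * (1 + l / m) * m = t * (m + l) := by field_simp
    rw [he1] at h0
    exact h0
  have hp' : p = 1 / (1 + R) := by rw [hpdef, pstar, ← ht, ← hR]
  have hqt : q * t = 1 - q := by rw [ht]; field_simp
  have hlogbt : Real.logb 2 t = l / Real.log 2 := by rw [Real.logb, hl]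
  have hlogbt0 : Real.logb 2 t₀ ≤ Real.logb 2 t :=
    Real.logb_le_logb_of_le (by norm_num) ht₀0 ht₀t.le
  clear_value p R l t
  clear hder hRe hpr ht hl hR hexp
  have hq1t : q * (1 + t) = 1 := by linear_combination hqt
  have hq1q : q * (1 - q) = q ^ 2 * t := by linear_combination (-q) * hqt
  have h1R0 : (0:ℝ) < 1 + R := by linarith
  have h1t0 : (0:ℝ) < 1 + t := by linarith
  have hqp : q - p = q * (R - t) / (1 + R) := by
    rw [hp']
    field_simp
    linear_combination hqt
  have hkey : min 1 l * (q * (1 - q)) ≤ lam * (q - p) := by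
    have hstep1 : t * (R - t) / (R * (1 + t)) ≤ (R - t) / (1 + R) := by
      rw [div_le_div_iff₀ (by positivity) h1R0]
      have hring : (R - t) * (R * (1 + t)) - t * (R - t) * (1 + R) = (R - t) ^ 2 := by ring
      linarith [sq_nonneg (R - t)]
    have hfrac : l / (m + l) ≤ (R - t) / R := by
      rw [div_le_div_iff₀ hml hR0]
      have hring : (R - t) * (m + l) - l * R = R * m - t * (m + l) := by ring
      linarith [hRm]
    have hstep2 : t * (l / (m + l)) / (1 + t) ≤ t * (R - t) / (R * (1 + t)) := by
      rw [div_le_div_iff₀ h1t0 (by positivity)]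
      calc t * (l / (m + l)) * (R * (1 + t)) = (l / (m + l)) * R * (t * (1 + t)) := by ring
        _ ≤ ((R - t) / R) * R * (t * (1 + t)) := by
            apply mul_le_mul_of_nonneg_right _ (by positivity)
            apply mul_le_mul_of_nonneg_right hfrac hR0.le
        _ = (R - t) * (t * (1 + t)) := by field_simp
        _ = t * (R - t) * (1 + t) := by ring
    have hc1 : q * (t * (l / (m + l)) / (1 + t)) ≤ q - p := by
      rw [hqp]
      calc q * (t * (l / (m + l)) / (1 + t)) ≤ q * ((R - t) / (1 + R)) := by
            apply mul_le_mul_of_nonneg_left (le_trans hstep2 hstep1) hq0.le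
        _ = q * (R - t) / (1 + R) := by ring
    have he : q * (t * (l / (m + l)) / (1 + t)) = q ^ 2 * t * l / (m + l) := by
      have hqe : q = 1 / (1 + t) := by rw [eq_div_iff h1t0.ne']; exact hq1t
      rw [hqe]
      field_simp
    have hmin : min 1 l * (m + l) ≤ lam * l := by
      have hlam' : lam = m + 1 := by rw [hm']; ring
      rw [hlam']
      exact aux_min m l hm hl0
    rw [hq1q]
    calc min 1 l * (q ^ 2 * t) ≤ (lam * l / (m + l)) * (q ^ 2 * t) := by
          apply mul_le_mul_of_nonneg_right _ (by positivity)
          rw [le_div_iff₀ hml]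
          exact hmin
      _ = lam * (q ^ 2 * t * l / (m + l)) := by ring
      _ ≤ lam * (q - p) := by
          apply mul_le_mul_of_nonneg_left _ (by linarith : (0:ℝ) ≤ lam)
          rw [← he]
          exact hc1
  have hDlb : min c (Real.logb 2 t₀) ≤ deriv (Ulam lam) q := by
    rw [hderiv]
    have hDge : min 1 l / Real.log 2 ≤ lam * (q - p) / (q * (1 - q) * Real.log 2) := by
      rw [div_le_div_iff₀ hlog2 (by positivity)]
      calc min 1 l * (q * (1 - q) * Real.log 2) = (min 1 l * (q * (1 - q))) * Real.log 2 := by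
            ring
        _ ≤ (lam * (q - p)) * Real.log 2 := mul_le_mul_of_nonneg_right hkey hlog2.le
        _ = lam * (q - p) * Real.log 2 := by ring
    have hminc : min c (Real.logb 2 t₀) ≤ min 1 l / Real.log 2 := by
      have he2 : min 1 l / Real.log 2 = min (1 / Real.log 2) (l / Real.log 2) :=
        (min_div_div_right hlog2.le 1 l).symm
      rw [he2, ← hlogbt, ← hc]
      exact min_le_min (le_refl c) hlogbt0
    linarith
  have hd2' : 0 < 2 / Real.log 2 * d ^ 2 := mul_pos (by positivity) hd2
  have hM0 : 0 < min c (Real.logb 2 t₀) := lt_min (by rw [hc]; positivity) (lt_trans hd2' hpart3)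
  have hrec : 1 / deriv (Ulam lam) q ≤ max (1 / c) (Real.log 2 / 2 * (d ^ 2)⁻¹) := by
    have h1 : 1 / deriv (Ulam lam) q ≤ 1 / min c (Real.logb 2 t₀) :=
      one_div_le_one_div_of_le hM0 hDlb
    have h2 : 1 / min c (Real.logb 2 t₀) ≤ max (1 / c) (Real.log 2 / 2 * (d ^ 2)⁻¹) := by
      rcases min_cases c (Real.logb 2 t₀) with ⟨hm1, _⟩ | ⟨hm1, _⟩
      · rw [hm1]; exact le_max_left _ _
      · rw [hm1]
        refine le_trans ?_ (le_max_right _ _)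
        have h3 : 1 / Real.logb 2 t₀ ≤ 1 / (2 / Real.log 2 * d ^ 2) :=
          one_div_le_one_div_of_le hd2' hpart3.le
        have h4 : 1 / (2 / Real.log 2 * d ^ 2) = Real.log 2 / 2 * (d ^ 2)⁻¹ := by
          rw [one_div, mul_inv, inv_div]
        linarith
    linarith
  exact ⟨hdiff, hDlb, hpart3, hrec⟩
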